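/- If X₁, …, X_k are independent real random variables with X_i ≤ b almost surely for a constant b > 0, S = ∑_{i=1}^k (X_i − E[X_i]) and v = ∑_{i=1}^k E[X_i²], then for all t ≥ 0, P(S ≥ t) ≤ exp(−t² / (2v + (2/3)bt)). -/

import Mathlib

open MeasureTheory Real

lemma exp_le_quad_neg (u : ℝ) (hu : u ≤ 0) : Real.exp u ≤ 1 + u + u ^ 2 / 2 := by
  have h : Antitone (fun u : ℝ => 1 + u + u ^ 2 / 2 - Real.exp u) := by
    apply antitone_of_deriv_nonpos
    · fun_prop
    · intro x
      have hd : HasDerivAt (fun u : ℝ => 1 + u + u ^ 2 / 2 - Real.exp u)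
          (1 + x - Real.exp x) x := by
        have h1 : HasDerivAt (fun u : ℝ => 1 + u + u ^ 2 / 2) (1 + x) x := by
          have := ((hasDerivAt_id x).const_add 1).add
            (((hasDerivAt_pow 2 x)).div_const 2)
          exact this.congr_deriv (by norm_num)
        have := h1.sub (Real.hasDerivAt_exp x)
        exact this
      rw [hd.deriv]
      have := Real.add_one_le_exp x
      linarith
  have := h hu
  simp at this
  linarith

lemma two_mul_three_pow_le_factorial (n : ℕ) : 2 * 3 ^ n ≤ Nat.factorial (n + 2) := by
  induction n with
  | zero => simp [Nat.factorial]
  | succ n ih =>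
    have : Nat.factorial (n + 3) = (n + 3) * Nat.factorial (n + 2) := rfl
    rw [this]
    calc 2 * 3 ^ (n + 1) = 3 * (2 * 3 ^ n) := by ring
    _ ≤ 3 * Nat.factorial (n + 2) := by omega
    _ ≤ (n + 3) * Nat.factorial (n + 2) := by
        apply Nat.mul_le_mul_right; omega

lemma exp_le_quad_pos (x : ℝ) (hx : 0 ≤ x) (hx3 : x < 3) :
    Real.exp x ≤ 1 + x + x ^ 2 / (2 * (1 - x / 3)) := by
  have hsum : Summable (fun n : ℕ => x ^ n / n.factorial) :=
    Real.summable_pow_div_factorial x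
  have hexp : Real.exp x = ∑' n : ℕ, x ^ n / n.factorial := by
    rw [Real.exp_eq_exp_ℝ, NormedSpace.exp_eq_tsum_div]
  have h1 : (∑' n : ℕ, x ^ n / n.factorial)
      = 1 + (x + ∑' n : ℕ, x ^ (n + 2) / (n + 2).factorial) := by
    rw [Summable.tsum_eq_zero_add hsum, Summable.tsum_eq_zero_add ((summable_nat_add_iff (f := fun n : ℕ => x ^ n / n.factorial) 1).2 hsum)]
    norm_num
  have hgsum : Summable (fun n : ℕ => x ^ 2 / 2 * (x / 3) ^ n) := by
    apply Summable.mul_left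
    apply summable_geometric_of_lt_one (by positivity) (by linarith)
  have hle : ∑' n : ℕ, x ^ (n + 2) / (n + 2).factorial
      ≤ ∑' n : ℕ, x ^ 2 / 2 * (x / 3) ^ n := by
    refine Summable.tsum_le_tsum (fun n => ?_) ((summable_nat_add_iff (f := fun n : ℕ => x ^ n / n.factorial) 2).2 hsum) hgsum
    have hf := two_mul_three_pow_le_factorial n
    have hf' : (2 : ℝ) * 3 ^ n ≤ ((n + 2).factorial : ℝ) := by exact_mod_cast hf
    rw [div_le_iff₀ (by positivity)]
    have : x ^ 2 / 2 * (x / 3) ^ n = x ^ (n + 2) / (2 * 3 ^ n) := by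
      rw [div_pow, pow_add]
      ring
    rw [this, div_mul_eq_mul_div, le_div_iff₀ (by positivity)]
    have hxn : 0 ≤ x ^ (n + 2) := by positivity
    nlinarith
  have hgeo : ∑' n : ℕ, x ^ 2 / 2 * (x / 3) ^ n = x ^ 2 / 2 * (1 - x / 3)⁻¹ := by
    rw [tsum_mul_left, tsum_geometric_of_lt_one (by positivity) (by linarith)]
  rw [hexp, h1]
  have : x ^ 2 / 2 * (1 - x / 3)⁻¹ = x ^ 2 / (2 * (1 - x / 3)) := by
    field_simp
  linarith [hle.trans_eq (hgeo.trans this)]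

lemma key_pointwise (b l x : ℝ) (hb : 0 < b) (hl : 0 ≤ l) (hlb : l * b < 3) (hx : x ≤ b) :
    Real.exp (l * x) ≤ 1 + l * x + l ^ 2 / (2 * (1 - l * b / 3)) * x ^ 2 := by
  have hd : 0 < 2 * (1 - l * b / 3) := by nlinarith
  have hux : l ^ 2 / (2 * (1 - l * b / 3)) * x ^ 2 = (l * x) ^ 2 / (2 * (1 - l * b / 3)) := by
    ring
  rw [hux]
  set u := l * x with hu
  rcases le_or_gt u 0 with h0 | h0
  · have h1 := exp_le_quad_neg u h0
    have h2 : u ^ 2 / 2 ≤ u ^ 2 / (2 * (1 - l * b / 3)) := by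
      apply div_le_div_of_nonneg_left (by positivity) hd
      nlinarith [mul_nonneg hl hb.le]
    linarith
  · have hub : u ≤ l * b := by
      apply mul_le_mul_of_nonneg_left hx hl
    have h1 := exp_le_quad_pos u h0.le (lt_of_le_of_lt hub hlb)
    have h2 : u ^ 2 / (2 * (1 - u / 3)) ≤ u ^ 2 / (2 * (1 - l * b / 3)) := by
      apply div_le_div_of_nonneg_left (by positivity) hd
      nlinarith
    linarith

lemma mgf_bound {Ω : Type*} [MeasurableSpace Ω] (μ : Measure Ω) [IsProbabilityMeasure μ]
    (X : Ω → ℝ) (hm : Measurable X) (b l : ℝ) (hb : 0 < b) (hl : 0 ≤ l) (hlb : l * b < 3)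
    (hbd : ∀ᵐ ω ∂μ, X ω ≤ b) (h1 : Integrable X μ) (h2 : Integrable (fun ω => X ω ^ 2) μ) :
    ProbabilityTheory.mgf (fun ω => X ω - ∫ ω', X ω' ∂μ) μ l
      ≤ Real.exp (l ^ 2 / (2 * (1 - l * b / 3)) * ∫ ω', X ω' ^ 2 ∂μ) := by
  set m := ∫ ω', X ω' ∂μ with hm'
  set q := ∫ ω', X ω' ^ 2 ∂μ with hq'
  set D := l ^ 2 / (2 * (1 - l * b / 3)) with hD
  have hintexp : Integrable (fun ω => Real.exp (l * X ω)) μ := by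
    refine Integrable.mono' (integrable_const (Real.exp (l * b)))
      ((hm.const_mul l).exp.aestronglyMeasurable) ?_
    filter_upwards [hbd] with ω hω
    rw [Real.norm_eq_abs, abs_of_pos (Real.exp_pos _)]
    exact Real.exp_le_exp.2 (mul_le_mul_of_nonneg_left hω hl)
  have hintpoly : Integrable (fun ω => 1 + l * X ω + D * X ω ^ 2) μ :=
    ((integrable_const 1).add (h1.const_mul l)).add (h2.const_mul D)
  have hle : ∫ ω, Real.exp (l * X ω) ∂μ ≤ 1 + l * m + D * q := by
    have : ∫ ω, Real.exp (l * X ω) ∂μ ≤ ∫ ω, (1 + l * X ω + D * X ω ^ 2) ∂μ := by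
      refine integral_mono_ae hintexp hintpoly ?_
      filter_upwards [hbd] with ω hω
      exact key_pointwise b l (X ω) hb hl hlb hω
    have eA : ∫ ω, (1 + l * X ω) ∂μ = 1 + l * m := by
      rw [integral_add (integrable_const 1) (h1.const_mul l), integral_const,
        integral_const_mul]
      simp [hm']
    have eB : ∫ ω, (1 + l * X ω + D * X ω ^ 2) ∂μ
        = (∫ ω, (1 + l * X ω) ∂μ) + D * q := by
      rw [integral_add (show Integrable (fun ω => 1 + l * X ω) μ from
        (integrable_const 1).add (h1.const_mul l)) (h2.const_mul D), integral_const_mul]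
    rw [eB, eA] at this
    exact this
  have hfin : ∫ ω, Real.exp (l * X ω) ∂μ ≤ Real.exp (l * m + D * q) := by
    refine hle.trans ?_
    have := Real.add_one_le_exp (l * m + D * q)
    linarith
  unfold ProbabilityTheory.mgf
  have : ∀ ω, Real.exp (l * (X ω - m)) = Real.exp (- (l * m)) * Real.exp (l * X ω) := by
    intro ω; rw [← Real.exp_add]; ring_nf
  calc ∫ ω, Real.exp (l * (X ω - m)) ∂μ
      = Real.exp (- (l * m)) * ∫ ω, Real.exp (l * X ω) ∂μ := by
        rw [← integral_const_mul]; exact integral_congr_ae (ae_of_all _ this)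
    _ ≤ Real.exp (- (l * m)) * Real.exp (l * m + D * q) := by
        apply mul_le_mul_of_nonneg_left hfin (Real.exp_pos _).le
    _ = Real.exp (D * q) := by rw [← Real.exp_add]; ring_nf

/-- Bennett/Bernstein inequality: if `X₁, …, X_k` are independent real random variables
with finite variance and `X i ≤ b` a.s. for a constant `b > 0`, then with
`S = ∑ (X i − E[X i])` and `v = ∑ E[X i ^ 2]`, for all `t ≥ 0`,
`P(S ≥ t) ≤ exp (−t² / (2 v + (2/3) b t))`. -/
theorem bernstein_inequality
    {Ω : Type*} [MeasurableSpace Ω] (μ : Measure Ω) [IsProbabilityMeasure μ]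
    (k : ℕ) (X : Fin k → Ω → ℝ)
    (hmeas : ∀ i, Measurable (X i))
    (hindep : ProbabilityTheory.iIndepFun X μ)
    (b : ℝ) (hb : 0 < b)
    (hbd : ∀ i, ∀ᵐ ω ∂μ, X i ω ≤ b)
    (hint : ∀ i, Integrable (X i) μ)
    (hint2 : ∀ i, Integrable (fun ω => (X i ω) ^ 2) μ)
    (t : ℝ) (ht : 0 ≤ t) :
    (μ {ω | t ≤ ∑ i, (X i ω - ∫ ω', X i ω' ∂μ)}).toReal ≤
      Real.exp (-(t ^ 2) / (2 * (∑ i, ∫ ω', (X i ω') ^ 2 ∂μ) + (2 / 3) * b * t)) := by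
  set m : Fin k → ℝ := fun i => ∫ ω', X i ω' ∂μ with hm
  set q : Fin k → ℝ := fun i => ∫ ω', (X i ω') ^ 2 ∂μ with hq
  set v : ℝ := ∑ i, q i with hv
  set Y : Fin k → Ω → ℝ := fun i ω => X i ω - m i with hY
  have hYmeas : ∀ i, Measurable (Y i) := fun i => (hmeas i).sub_const (m i)
  have hYindep : ProbabilityTheory.iIndepFun Y μ :=
    hindep.comp (fun i x => x - m i) (fun i => measurable_id.sub_const (m i))
  have hqnn : ∀ i, 0 ≤ q i := fun i => integral_nonneg (fun ω => sq_nonneg _)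
  have hvnn : 0 ≤ v := Finset.sum_nonneg fun i _ => hqnn i
  -- Chernoff step
  have chernoff : ∀ l : ℝ, 0 ≤ l → l * b < 3 →
      (μ {ω | t ≤ ∑ i, (X i ω - m i)}).toReal
        ≤ Real.exp (-l * t + l ^ 2 / (2 * (1 - l * b / 3)) * v) := by
    intro l hl hlb
    set D := l ^ 2 / (2 * (1 - l * b / 3)) with hD
    have hSint : Integrable (fun ω => Real.exp (l * ∑ i, Y i ω)) μ := by
      refine Integrable.mono' (integrable_const (Real.exp (l * ∑ i, (b - m i))))
        ((measurable_const.mul (Finset.measurable_sum Finset.univ fun i _ => hYmeas i)).exp).aestronglyMeasurable ?_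
      have hball : ∀ᵐ ω ∂μ, ∀ i, X i ω ≤ b := (ae_all_iff).2 hbd
      filter_upwards [hball] with ω hω
      rw [Real.norm_eq_abs, abs_of_pos (Real.exp_pos _)]
      apply Real.exp_le_exp.2
      apply mul_le_mul_of_nonneg_left _ hl
      exact Finset.sum_le_sum fun i _ => by have := hω i; simp [hY]; linarith
    have hch := ProbabilityTheory.measure_ge_le_exp_mul_mgf (X := fun ω => ∑ i, Y i ω)
      (μ := μ) t hl hSint
    have hfun : (fun ω => ∑ i, Y i ω) = ∑ i, Y i := by
      funext ω; simp [Finset.sum_apply]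
    have hmgf : ProbabilityTheory.mgf (fun ω => ∑ i, Y i ω) μ l
        = ∏ i, ProbabilityTheory.mgf (Y i) μ l := by
      rw [hfun]; exact hYindep.mgf_sum hYmeas Finset.univ
    have hprod : ∏ i, ProbabilityTheory.mgf (Y i) μ l ≤ ∏ i, Real.exp (D * q i) := by
      apply Finset.prod_le_prod (fun i _ => ProbabilityTheory.mgf_nonneg)
      intro i _
      exact mgf_bound μ (X i) (hmeas i) b l hb hl hlb (hbd i) (hint i) (hint2 i)
    have hprodexp : ∏ i, Real.exp (D * q i) = Real.exp (D * v) := by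
      rw [← Real.exp_sum, hv, Finset.mul_sum]
    calc (μ {ω | t ≤ ∑ i, (X i ω - m i)}).toReal
        ≤ Real.exp (-l * t) * ProbabilityTheory.mgf (fun ω => ∑ i, Y i ω) μ l := hch
      _ ≤ Real.exp (-l * t) * Real.exp (D * v) := by
          apply mul_le_mul_of_nonneg_left _ (Real.exp_pos _).le
          rw [hmgf]; exact hprod.trans hprodexp.le
      _ = Real.exp (-l * t + D * v) := by rw [← Real.exp_add]
  rcases eq_or_lt_of_le ht with ht0 | htpos
  · -- t = 0
    have : (μ {ω | t ≤ ∑ i, (X i ω - m i)}).toReal ≤ 1 := by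
      rw [← ENNReal.toReal_one]
      exact ENNReal.toReal_mono (by simp) prob_le_one
    refine this.trans ?_
    rw [← ht0]
    norm_num
  · rcases eq_or_lt_of_le hvnn with hv0 | hvpos
    · -- v = 0, t > 0
      have h := chernoff (2 / b) (by positivity) (by field_simp; linarith)
      refine h.trans ?_
      rw [← hv0]
      apply Real.exp_le_exp.2
      have e : -t ^ 2 / (2 * 0 + 2 / 3 * b * t) = -(3 * t) / (2 * b) := by
        rw [mul_zero, zero_add]
        field_simp
      rw [mul_zero, add_zero, e]
      have eL : -(2 / b) * t = -(4 * t) / (2 * b) := by field_simp; ring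
      rw [eL, div_le_div_iff₀ (by positivity) (by positivity)]
      nlinarith
    · -- v > 0
      set l := 3 * t / (3 * v + b * t) with hl
      have hden : 0 < 3 * v + b * t := by positivity
      have hl0 : 0 ≤ l := by positivity
      have hlb : l * b < 3 := by
        rw [hl, div_mul_eq_mul_div, div_lt_iff₀ hden]
        nlinarith
      have h := chernoff l hl0 hlb
      refine h.trans (Real.exp_le_exp.2 (le_of_eq ?_)) 
      have h1 : (1 - l * b / 3) = 3 * v / (3 * v + b * t) := by
        rw [hl]; field_simp; ring
      rw [h1, hl]
      have h2 : 2 * v + 2 / 3 * b * t ≠ 0 := by positivity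
      field_simp
      ring
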